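/- arXiv:1407.2691 — 3 statements merged into one kernel-verified Lean document; each statement's English description precedes it below -/
import Mathlib

section
/- Suppose M = ⊕_{i=1}^n ⊕_{j=1}^{t_i} Λe_i/C_{ij} with submodules C_{ij} ⊆ Je_i such that, for each fixed i, the C_{ij} are linearly ordered under inclusion, and let P = ⊕_{i=1}^n (Λe_i)^{t_i} (a projective cover of M). Then dim_K Hom_Λ(P, JM) = dim_K Hom_Λ(M, JM) if and only if f(C_{ij}) ⊆ C_{kl} for all pairs of indices (i,j) and (k,l), not necessarily distinct, and all Λ-homomorphisms f : Λe_i → Je_k. -/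
open Submodule

/-- The submodule `J•M` of `M`, where `J` is the Jacobson radical of `Λ`. -/
def radsub (Λ : Type) [Ring Λ] (M : Type) [AddCommGroup M] [Module Λ M] :
    Submodule Λ M :=
  Submodule.span Λ {x : M | ∃ a ∈ (⊥ : Ideal Λ).jacobson, ∃ m : M, x = a • m}

/-- Riedtmann–Zwara: `N` is a degeneration of `M` if there is a short exact sequence
`0 → Z → Z ⊕ M → N → 0` for some finite `Λ`-module `Z`. -/
def IsDegeneration (Λ : Type) [Ring Λ] (M N : Type) [AddCommGroup M] [Module Λ M]
    [AddCommGroup N] [Module Λ N] : Prop :=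
  ∃ (Z : Type) (_ : AddCommGroup Z) (_ : Module Λ Z) (_ : Module.Finite Λ Z)
    (f : Z →ₗ[Λ] Z × M) (g : Z × M →ₗ[Λ] N),
      Function.Injective f ∧ Function.Surjective g ∧
        LinearMap.range f = LinearMap.ker g

/-- A degeneration is top-stable if it has the same top `M/JM`. -/
def IsTopStableDegeneration (Λ : Type) [Ring Λ] (M N : Type) [AddCommGroup M] [Module Λ M]
    [AddCommGroup N] [Module Λ N] : Prop :=
  IsDegeneration Λ M N ∧
    Nonempty ((N ⧸ radsub Λ N) ≃ₗ[Λ] (M ⧸ radsub Λ M))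

/-- `M` has no proper top-stable degeneration. -/
def HasNoProperTopStableDegeneration (Λ : Type) [Ring Λ] (M : Type) [AddCommGroup M]
    [Module Λ M] : Prop :=
  ∀ (N : Type) (_ : AddCommGroup N) (_ : Module Λ N) (_ : Module.Finite Λ N),
    IsTopStableDegeneration Λ M N → Nonempty (N ≃ₗ[Λ] M)

/-- The left ideal `Λx` as a submodule of `Λ`. -/
def Pe (Λ : Type) [Ring Λ] (x : Λ) : Submodule Λ Λ := Submodule.span Λ {x}

/-- The left ideal `Jx` as a submodule of `Λ`. -/
def Je (Λ : Type) [Ring Λ] (x : Λ) : Submodule Λ Λ :=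
  Submodule.span Λ {y : Λ | ∃ a ∈ (⊥ : Ideal Λ).jacobson, y = a * x}

/-- The `K`-subspace of `Hom_Λ(P, M)` consisting of the maps with image inside the
submodule `W` of `M`; used to express `Hom_Λ(P, W)` as a `K`-vector space. -/
def homInto (K : Type) [CommSemiring K] (Λ : Type) [Ring Λ] [Algebra K Λ]
    (P M : Type) [AddCommGroup P] [Module Λ P] [AddCommGroup M] [Module K M] [Module Λ M]
    [IsScalarTower K Λ M] [SMulCommClass Λ K M] (W : Submodule Λ M) :
    Submodule K (P →ₗ[Λ] M) where
  carrier := {f | LinearMap.range f ≤ W}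
  zero_mem' := by rintro x ⟨y, rfl⟩; simp
  add_mem' := by
    intro f g hf hg
    rintro x ⟨y, rfl⟩
    exact W.add_mem (hf ⟨y, rfl⟩) (hg ⟨y, rfl⟩)
  smul_mem' := by
    intro k f hf
    rintro x ⟨y, rfl⟩
    have h1 : (k • f) y = (algebraMap K Λ k) • f y := by
      rw [LinearMap.smul_apply, algebraMap_smul]
    rw [h1]
    exact W.smul_mem _ (hf ⟨y, rfl⟩)

open scoped DirectSum

section Helpers

variable {Λ : Type} [Ring Λ]

lemma jac_mul_right {a : Λ} (ha : a ∈ (⊥ : Ideal Λ).jacobson) (b : Λ) :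
    a * b ∈ (⊥ : Ideal Λ).jacobson := by
  rw [Ideal.mem_jacobson_iff] at ha ⊢
  intro y
  obtain ⟨z, hz⟩ := ha (b * y)
  rw [Ideal.mem_bot] at hz
  have h1 : z * (b * y) * a + z = 1 := sub_eq_zero.mp hz
  refine ⟨1 - y * a * z * b, ?_⟩
  rw [Ideal.mem_bot]
  have key : (1 - y * a * z * b) * y * (a * b) + (1 - y * a * z * b) - 1
      = y * a * b - y * a * (z * (b * y) * a + z) * b := by noncomm_ring
  rw [key, h1]
  noncomm_ring

lemma mem_Pe_self (e : Λ) : e ∈ Pe Λ e := Submodule.mem_span_singleton_self e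

lemma mem_Pe_mul {e x : Λ} (he : IsIdempotentElem e) (hx : x ∈ Pe Λ e) : x * e = x := by
  obtain ⟨c, rfl⟩ := Submodule.mem_span_singleton.mp hx
  show c * e * e = c * e
  rw [mul_assoc, he]

lemma Je_le_Pe (e : Λ) : Je Λ e ≤ Pe Λ e := by
  rw [Je, Submodule.span_le]
  rintro _ ⟨a, _, rfl⟩
  exact Submodule.smul_mem _ a (mem_Pe_self e)

lemma radsub_apply_mem {M N : Type} [AddCommGroup M] [Module Λ M] [AddCommGroup N]
    [Module Λ N] (φ : M →ₗ[Λ] N) {x : M} (hx : x ∈ radsub Λ M) : φ x ∈ radsub Λ N := by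
  induction hx using Submodule.span_induction with
  | mem x h =>
    obtain ⟨a, ha, m, rfl⟩ := h
    rw [map_smul]
    exact Submodule.subset_span ⟨a, ha, φ m, rfl⟩
  | zero => simp
  | add x y _ _ hx hy => rw [map_add]; exact (radsub Λ N).add_mem hx hy
  | smul c x _ hx => rw [map_smul]; exact (radsub Λ N).smul_mem c hx

lemma radsub_quot_le {e : Λ} (Cs : Submodule Λ ↥(Pe Λ e)) :
    radsub Λ (↥(Pe Λ e) ⧸ Cs) ≤
      Submodule.map Cs.mkQ (Submodule.comap (Pe Λ e).subtype (Je Λ e)) := by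
  rw [radsub, Submodule.span_le]
  rintro _ ⟨a, ha, m, rfl⟩
  obtain ⟨x, rfl⟩ := Submodule.mkQ_surjective Cs m
  refine ⟨a • x, ?_, (map_smul Cs.mkQ a x).symm⟩
  obtain ⟨c, hc⟩ := Submodule.mem_span_singleton.mp x.2
  show (↑(a • x) : Λ) ∈ Je Λ e
  have : (↑(a • x) : Λ) = (a * c) * e := by
    simp [← hc, smul_eq_mul, mul_assoc]
  rw [this]
  exact Submodule.subset_span ⟨a * c, jac_mul_right ha c, rfl⟩

lemma mkQ_mem_radsub {e : Λ} (he : IsIdempotentElem e) (Cs : Submodule Λ ↥(Pe Λ e))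
    (u : ↥(Pe Λ e)) (hu : (u : Λ) ∈ Je Λ e) :
    Cs.mkQ u ∈ radsub Λ (↥(Pe Λ e) ⧸ Cs) := by
  have hmem : ∀ c : Λ, c * e ∈ Pe Λ e := fun c => Submodule.smul_mem _ c (mem_Pe_self e)
  let θ : Λ →ₗ[Λ] (↥(Pe Λ e) ⧸ Cs) :=
    { toFun := fun c => Cs.mkQ ⟨c * e, hmem c⟩
      map_add' := fun c d => by
        have h2 : (⟨(c + d) * e, hmem _⟩ : ↥(Pe Λ e)) = ⟨c * e, hmem c⟩ + ⟨d * e, hmem d⟩ :=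
          Subtype.ext (add_mul c d e)
        show Cs.mkQ ⟨(c + d) * e, hmem _⟩ = _
        rw [h2, map_add]
      map_smul' := fun c d => by
        simp only [RingHom.id_apply]
        rw [← map_smul]; congr 1; exact Subtype.ext (by simp [smul_eq_mul, mul_assoc]) }
  have hθ : ∀ y ∈ Je Λ e, θ y ∈ radsub Λ (↥(Pe Λ e) ⧸ Cs) := by
    intro y hy
    induction hy using Submodule.span_induction with
    | mem x h =>
      obtain ⟨a, ha, rfl⟩ := h
      have : θ (a * e) = a • Cs.mkQ ⟨e, mem_Pe_self e⟩ := by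
        rw [← map_smul]
        show Cs.mkQ ⟨a * e * e, _⟩ = Cs.mkQ (a • ⟨e, mem_Pe_self e⟩)
        congr 1
        exact Subtype.ext (by simp [smul_eq_mul, mul_assoc, he.eq])
      rw [this]
      exact Submodule.subset_span ⟨a, ha, _, rfl⟩
    | zero => simp
    | add x y _ _ hx hy => rw [map_add]; exact Submodule.add_mem _ hx hy
    | smul c x _ hx => rw [map_smul]; exact Submodule.smul_mem _ c hx
  have : θ (u : Λ) = Cs.mkQ u := by
    show Cs.mkQ ⟨(u : Λ) * e, _⟩ = Cs.mkQ u
    congr 1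
    exact Subtype.ext (mem_Pe_mul he u.2)
  rw [← this]
  exact hθ _ hu

lemma hom_Pe_apply {e : Λ} (he : IsIdempotentElem e) {N : Type} [AddCommGroup N]
    [Module Λ N] (h : ↥(Pe Λ e) →ₗ[Λ] N) (x : ↥(Pe Λ e)) :
    h x = (x : Λ) • h ⟨e, mem_Pe_self e⟩ := by
  have hx : (x : Λ) • (⟨e, mem_Pe_self e⟩ : ↥(Pe Λ e)) = x :=
    Subtype.ext (by simp [smul_eq_mul, mem_Pe_mul he x.2])
  conv_lhs => rw [← hx]
  rw [map_smul]

end Helpers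

set_option maxHeartbeats 2000000 in
/-- The `Hom`-dimension condition is equivalent to invariance of the `C_{ij}`. -/
theorem hom_dim_eq_iff_invariant
    (K : Type) [Field K] [IsAlgClosed K]
    (Λ : Type) [Ring Λ] [Algebra K Λ] [FiniteDimensional K Λ]
    (n : ℕ) (e : Fin n → Λ)
    (hIdem : ∀ i, IsIdempotentElem (e i))
    (hOrth : ∀ i j, i ≠ j → e i * e j = 0)
    (hSum : ∑ i, e i = 1)
    (hPrim : ∀ i, ∀ f : Λ, IsIdempotentElem f → f * e i = f → e i * f = f →
      f = 0 ∨ f = e i)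
    (hBasic : ∀ i j, i ≠ j → IsEmpty (↥(Pe Λ (e i)) ≃ₗ[Λ] ↥(Pe Λ (e j))))
    (t : Fin n → ℕ) (C : ∀ i : Fin n, Fin (t i) → Submodule Λ Λ)
    (hC : ∀ i j, C i j ≤ Je Λ (e i))
    (hord : ∀ i, ∀ j j' : Fin (t i), C i j ≤ C i j' ∨ C i j' ≤ C i j)
    -- `M = ⊕_{i,j} Λe_i/C_{ij}`
    (M : Type) [AddCommGroup M] [Module K M] [Module Λ M] [IsScalarTower K Λ M]
    [SMulCommClass Λ K M] [FiniteDimensional K M]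
    (hM : Nonempty (M ≃ₗ[Λ] ⨁ (p : Σ i : Fin n, Fin (t i)),
      (↥(Pe Λ (e p.1)) ⧸ Submodule.comap (Pe Λ (e p.1)).subtype (C p.1 p.2))))
    -- `P = ⊕_i (Λe_i)^{t_i}`, a projective cover of `M`
    (P : Type) [AddCommGroup P] [Module Λ P]
    (hP : Nonempty (P ≃ₗ[Λ] ⨁ (p : Σ i : Fin n, Fin (t i)), ↥(Pe Λ (e p.1)))) :
    Module.finrank K ↥(homInto K Λ P M (radsub Λ M)) =
        Module.finrank K ↥(homInto K Λ M M (radsub Λ M)) ↔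
      (∀ i j k l, ∀ f : ↥(Pe Λ (e i)) →ₗ[Λ] ↥(Je Λ (e k)),
        Submodule.map (Je Λ (e k)).subtype
          (Submodule.map f (Submodule.comap (Pe Λ (e i)).subtype (C i j))) ≤ C k l) := by
  classical
  obtain ⟨eM⟩ := hM
  obtain ⟨eP⟩ := hP
  set ι : Type := Σ i : Fin n, Fin (t i) with hι
  let β : ι → Type := fun p => ↥(Pe Λ (e p.1))
  let Cp : ∀ p : ι, Submodule Λ (β p) :=
    fun p => Submodule.comap (Pe Λ (e p.1)).subtype (C p.1 p.2)
  let Qβ : ι → Type := fun p => β p ⧸ Cp p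
  -- the canonical projection on the direct sums
  let π₀ : (⨁ p, β p) →ₗ[Λ] ⨁ p, Qβ p :=
    DirectSum.toModule Λ ι _ (fun p => (DirectSum.lof Λ ι Qβ p).comp (Cp p).mkQ)
  have hπ₀lof : ∀ (p : ι) (x : β p),
      π₀ (DirectSum.lof Λ ι β p x) = DirectSum.lof Λ ι Qβ p ((Cp p).mkQ x) := by
    intro p x
    exact DirectSum.toModule_lof Λ p x
  -- the projective cover map
  let π : P →ₗ[Λ] M := (eM.symm.toLinearMap.comp π₀).comp eP.toLinearMap
  have hπ₀surj : Function.Surjective π₀ := by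
    intro y
    induction y using DirectSum.induction_on with
    | zero => exact ⟨0, map_zero _⟩
    | of p q =>
      obtain ⟨x, rfl⟩ := Submodule.mkQ_surjective (Cp p) q
      exact ⟨DirectSum.lof Λ ι β p x, by rw [hπ₀lof, DirectSum.lof_eq_of]⟩
    | add x y hx hy =>
      obtain ⟨a, rfl⟩ := hx
      obtain ⟨b, rfl⟩ := hy
      exact ⟨a + b, map_add _ _ _⟩
  have hπsurj : Function.Surjective π := by
    intro m
    obtain ⟨d, hd⟩ := hπ₀surj (eM m)
    exact ⟨eP.symm d, by simp [π, hd]⟩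
  -- the comparison map Φ : Hom(M, JM) → Hom(P, JM)
  let Φ : ↥(homInto K Λ M M (radsub Λ M)) →ₗ[K] ↥(homInto K Λ P M (radsub Λ M)) :=
    { toFun := fun g => ⟨(g : M →ₗ[Λ] M).comp π,
        le_trans (LinearMap.range_comp_le_range π (g : M →ₗ[Λ] M)) g.2⟩
      map_add' := fun g₁ g₂ => Subtype.ext (LinearMap.add_comp _ _ _)
      map_smul' := fun c g => Subtype.ext (LinearMap.smul_comp _ _ _) }
  have hΦinj : Function.Injective Φ := by
    intro g₁ g₂ h
    apply Subtype.ext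
    apply LinearMap.ext
    intro m
    obtain ⟨z, rfl⟩ := hπsurj m
    have := congrArg (fun q => (q : ↥(homInto K Λ P M (radsub Λ M))).1 z) h
    simpa [Φ] using this
  -- finite dimensionality of the two Hom-spaces
  have finM : FiniteDimensional K (M →ₗ[Λ] M) := by
    let ρ : (M →ₗ[Λ] M) →ₗ[K] (M →ₗ[K] M) :=
      { toFun := LinearMap.restrictScalars K
        map_add' := fun f g => rfl
        map_smul' := fun c f => rfl }
    exact FiniteDimensional.of_injective ρ (LinearMap.restrictScalars_injective K)
  have finP : FiniteDimensional K (P →ₗ[Λ] M) := by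
    let Ψ : (P →ₗ[Λ] M) →ₗ[K] (ι → M) :=
      { toFun := fun f => fun p => f (eP.symm (DirectSum.lof Λ ι β p ⟨e p.1, mem_Pe_self _⟩))
        map_add' := fun f g => rfl
        map_smul' := fun c f => rfl }
    apply FiniteDimensional.of_injective Ψ
    intro f₁ f₂ h
    have key : ∀ d : ⨁ p, β p, f₁ (eP.symm d) = f₂ (eP.symm d) := by
      intro d
      induction d using DirectSum.induction_on with
      | zero => simp
      | of p x =>
        obtain ⟨c, hc⟩ := Submodule.mem_span_singleton.mp x.2
        have hx : x = c • (⟨e p.1, mem_Pe_self _⟩ : β p) := Subtype.ext (by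
          simp [smul_eq_mul, ← hc])
        rw [← DirectSum.lof_eq_of Λ, hx, map_smul, map_smul, map_smul, map_smul]
        exact congrArg (c • ·) (congrFun h p)
      | add x y hx hy => rw [map_add, map_add, map_add, hx, hy]
    ext z
    have := key (eP z)
    simpa using this
  constructor
  · -- dimension equality ⇒ invariance
    intro hdim
    have hΦsurj : Function.Surjective Φ := by
      have h1 : LinearMap.range Φ = ⊤ := by
        apply Submodule.eq_top_of_finrank_eq
        rw [LinearMap.finrank_range_of_inj hΦinj, hdim]
      exact LinearMap.range_eq_top.mp h1
    intro i j k l g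
    set p0 : ι := ⟨i, j⟩
    set q0 : ι := ⟨k, l⟩
    let incl : ↥(Je Λ (e k)) →ₗ[Λ] β q0 := Submodule.inclusion (Je_le_Pe (e k))
    let F : P →ₗ[Λ] M :=
      eM.symm.toLinearMap ∘ₗ DirectSum.lof Λ ι Qβ q0 ∘ₗ (Cp q0).mkQ ∘ₗ incl ∘ₗ g ∘ₗ
        DirectSum.component Λ ι β p0 ∘ₗ eP.toLinearMap
    have hFmem : F ∈ homInto K Λ P M (radsub Λ M) := by
      rintro _ ⟨z, rfl⟩
      have h2 : (Cp q0).mkQ (incl (g (DirectSum.component Λ ι β p0 (eP z)))) ∈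
          radsub Λ (Qβ q0) :=
        mkQ_mem_radsub (hIdem k) (Cp q0) _ (g (DirectSum.component Λ ι β p0 (eP z))).2
      have h3 := radsub_apply_mem (N := ⨁ p, Qβ p) (DirectSum.lof Λ ι Qβ q0) h2
      have h4 := radsub_apply_mem eM.symm.toLinearMap h3
      exact h4
    obtain ⟨G, hG⟩ := hΦsurj ⟨F, hFmem⟩
    have hGF : (G : M →ₗ[Λ] M).comp π = F := congrArg Subtype.val hG
    rintro _ ⟨_, ⟨x, hx, rfl⟩, rfl⟩
    -- x : β p0 with ↑x ∈ C i j; goal : ↑(g x) ∈ C k l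
    have hπz : π (eP.symm (DirectSum.lof Λ ι β p0 x)) = 0 := by
      have hmk : (Cp p0).mkQ x = 0 := (Submodule.Quotient.mk_eq_zero _).mpr hx
      simp [π, hπ₀lof, hmk]
    have hFz : F (eP.symm (DirectSum.lof Λ ι β p0 x)) = 0 := by
      rw [← hGF]
      simp [LinearMap.comp_apply, hπz]
    have h5 : eM.symm (DirectSum.lof Λ ι Qβ q0 ((Cp q0).mkQ (incl (g x)))) = 0 := by
      have hcomp : DirectSum.component Λ ι β p0 (DirectSum.lof Λ ι β p0 x) = x := by
        apply DirectSum.component.lof_self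
      simp [F, hcomp] at hFz
      rw [hFz, map_zero]
    have h6 : DirectSum.lof Λ ι Qβ q0 ((Cp q0).mkQ (incl (g x))) = 0 :=
      eM.symm.injective (by rw [h5, map_zero])
    have h7 : (Cp q0).mkQ (incl (g x)) = 0 := by
      have := congrArg (DirectSum.component Λ ι Qβ q0) h6
      rwa [DirectSum.component.lof_self, map_zero] at this
    have h8 : incl (g x) ∈ Cp q0 := (Submodule.Quotient.mk_eq_zero _).mp h7
    exact h8
  · -- invariance ⇒ dimension equality
    intro hinv
    have hΦsurj : Function.Surjective Φ := by
      rintro ⟨F, hF⟩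
      let F' : (⨁ p, β p) →ₗ[Λ] M := F.comp eP.symm.toLinearMap
      -- F' kills each C_{ij}
      have key : ∀ p : ι, Cp p ≤ LinearMap.ker (F'.comp (DirectSum.lof Λ ι β p)) := by
        intro p x hx
        obtain ⟨i, j⟩ := p
        let fp : β ⟨i, j⟩ →ₗ[Λ] M := F'.comp (DirectSum.lof Λ ι β ⟨i, j⟩)
        show fp x = 0
        have hcomp : ∀ q : ι, DirectSum.component Λ ι Qβ q (eM (fp x)) = 0 := by
          intro q
          obtain ⟨k, l⟩ := q
          let h' : β ⟨i, j⟩ →ₗ[Λ] Qβ ⟨k, l⟩ :=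
            (DirectSum.component Λ ι Qβ ⟨k, l⟩).comp (eM.toLinearMap.comp fp)
          let egen : β ⟨i, j⟩ := ⟨e i, mem_Pe_self _⟩
          have hrange : h' egen ∈ radsub Λ (Qβ ⟨k, l⟩) := by
            have h1 : fp egen ∈ radsub Λ M := hF ⟨eP.symm (DirectSum.lof Λ ι β ⟨i, j⟩ egen), rfl⟩
            exact radsub_apply_mem (DirectSum.component Λ ι Qβ ⟨k, l⟩)
              (radsub_apply_mem (N := ⨁ p, Qβ p) eM.toLinearMap h1)
          obtain ⟨u, hu, hmk⟩ := radsub_quot_le (Cp ⟨k, l⟩) hrange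
          -- the lift g : Λe_i → Je_k sending y to y * u
          let gkl : β ⟨i, j⟩ →ₗ[Λ] ↥(Je Λ (e k)) :=
            { toFun := fun y => ⟨(y : Λ) * (u : Λ), by
                have := (Je Λ (e k)).smul_mem (y : Λ) hu
                rwa [smul_eq_mul] at this⟩
              map_add' := fun y z => Subtype.ext (add_mul _ _ _)
              map_smul' := fun c y => Subtype.ext (mul_assoc c (y : Λ) (u : Λ)) }
          have hgx : ((x : Λ) * (u : Λ)) ∈ C k l :=
            hinv i j k l gkl ⟨gkl x, ⟨x, hx, rfl⟩, rfl⟩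
          have hxu : ((x : Λ) • u) ∈ Cp ⟨k, l⟩ := by
            exact hgx
          calc DirectSum.component Λ ι Qβ ⟨k, l⟩ (eM (fp x)) = h' x := rfl
            _ = (x : Λ) • h' egen := hom_Pe_apply (hIdem i) h' x
            _ = (x : Λ) • (Cp ⟨k, l⟩).mkQ u := by rw [← hmk]
            _ = (Cp ⟨k, l⟩).mkQ ((x : Λ) • u) := (map_smul _ _ _).symm
            _ = 0 := (Submodule.Quotient.mk_eq_zero _).mpr hxu
        have h9 : eM (fp x) = 0 := DirectSum.ext_component Λ (fun q => by rw [hcomp q, map_zero])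
        exact eM.injective (by rw [h9, map_zero] : eM (fp x) = eM 0)
      -- lift F' through the projection
      let Gq : (⨁ p, Qβ p) →ₗ[Λ] M :=
        DirectSum.toModule Λ ι M
          (fun p => Submodule.liftQ (Cp p) (F'.comp (DirectSum.lof Λ ι β p)) (key p))
      let G : M →ₗ[Λ] M := Gq.comp eM.toLinearMap
      have hGq : ∀ d : ⨁ p, β p, Gq (π₀ d) = F' d := by
        intro d
        induction d using DirectSum.induction_on with
        | zero => simp
        | of p x =>
          rw [← DirectSum.lof_eq_of Λ, hπ₀lof, DirectSum.toModule_lof]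
          erw [Submodule.liftQ_apply]
        | add x y hx hy => rw [map_add, map_add, map_add, hx, hy]
      have hGmem : G ∈ homInto K Λ M M (radsub Λ M) := by
        rintro _ ⟨m, rfl⟩
        show Gq (eM m) ∈ radsub Λ M
        obtain ⟨d, hd⟩ := hπ₀surj (eM m)
        rw [← hd, hGq]
        exact hF ⟨eP.symm d, rfl⟩
      refine ⟨⟨G, hGmem⟩, Subtype.ext ?_⟩
      show G.comp π = F
      apply LinearMap.ext
      intro z
      show Gq (eM (eM.symm (π₀ (eP z)))) = F z
      rw [LinearEquiv.apply_symm_apply, hGq]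
      show F (eP.symm (eP z)) = F z
      rw [LinearEquiv.symm_apply_apply]
    exact (LinearEquiv.ofBijective Φ ⟨hΦinj, hΦsurj⟩).finrank_eq.symm
end

section
/- Let T be a finite-dimensional semisimple Λ-module with projective cover P, and let C ⊆ JP be a submodule. Then f(C) ⊆ C for every Λ-homomorphism f : P → JP if and only if dim_K Hom_Λ(P, JP/C) = dim_K Hom_Λ(P/C, JP/C). -/
open Submodule

lemma radsub_map_surj {Λ : Type} [Ring Λ] {M N : Type} [AddCommGroup M] [Module Λ M]
    [AddCommGroup N] [Module Λ N] (g : M →ₗ[Λ] N) (hg : Function.Surjective g) :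
    (radsub Λ M).map g = radsub Λ N := by
  unfold radsub
  rw [Submodule.map_span]
  congr 1
  ext x
  constructor
  · rintro ⟨-, ⟨a, ha, m, rfl⟩, rfl⟩
    exact ⟨a, ha, g m, (map_smul g a m)⟩
  · rintro ⟨a, ha, n, rfl⟩
    obtain ⟨m, rfl⟩ := hg n
    exact ⟨a • m, ⟨a, ha, m, rfl⟩, map_smul g a m⟩

/-- Invariance of `C` under `Hom_Λ(P, JP)` is equivalent to the `Hom`-dimension condition
`dim_K Hom_Λ(P, JP/C) = dim_K Hom_Λ(P/C, JP/C)` (note `JP/C = J(P/C)` since `C ⊆ JP`). -/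
theorem invariant_iff_hom_dim
    (K : Type) [Field K] [IsAlgClosed K]
    (Λ : Type) [Ring Λ] [Algebra K Λ] [FiniteDimensional K Λ]
    -- `T` is a finite-dimensional semisimple module
    (T : Type) [AddCommGroup T] [Module K T] [Module Λ T] [IsScalarTower K Λ T]
    [FiniteDimensional K T] [IsSemisimpleModule Λ T]
    -- `P` is a projective cover of `T`
    (P : Type) [AddCommGroup P] [Module K P] [Module Λ P] [IsScalarTower K Λ P]
    [SMulCommClass Λ K P] [FiniteDimensional K P] [Module.Projective Λ P]
    (π : P →ₗ[Λ] T) (hπ : Function.Surjective π) (hker : LinearMap.ker π ≤ radsub Λ P)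
    (C : Submodule Λ P) (hC : C ≤ radsub Λ P) :
    (∀ f : P →ₗ[Λ] P, LinearMap.range f ≤ radsub Λ P → Submodule.map f C ≤ C) ↔
      Module.finrank K ↥(homInto K Λ P (P ⧸ C) (radsub Λ (P ⧸ C))) =
        Module.finrank K ↥(homInto K Λ (P ⧸ C) (P ⧸ C) (radsub Λ (P ⧸ C))) := by
    classical
  haveI : Module.Finite K (P ⧸ C) :=
    Module.Finite.of_surjective (C.mkQ.restrictScalars K) (Submodule.mkQ_surjective C)
  haveI : FiniteDimensional K (P →ₗ[Λ] P ⧸ C) :=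
    FiniteDimensional.of_injective
      (LinearMap.restrictScalarsₗ K Λ P (P ⧸ C) K)
      (LinearMap.restrictScalars_injective K)
  haveI : FiniteDimensional K ((P ⧸ C) →ₗ[Λ] P ⧸ C) :=
    FiniteDimensional.of_injective
      (LinearMap.restrictScalarsₗ K Λ (P ⧸ C) (P ⧸ C) K)
      (LinearMap.restrictScalars_injective K)
  set W := radsub Λ (P ⧸ C) with hWdef
  have hWmap : (radsub Λ P).map C.mkQ = W := radsub_map_surj C.mkQ (Submodule.mkQ_surjective C)
  have hrange : ∀ ψ : (P ⧸ C) →ₗ[Λ] (P ⧸ C),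
      LinearMap.range (ψ ∘ₗ C.mkQ) = LinearMap.range ψ := by
    intro ψ
    rw [LinearMap.range_comp, Submodule.range_mkQ, Submodule.map_top]
  let Φ : homInto K Λ (P ⧸ C) (P ⧸ C) W →ₗ[K] homInto K Λ P (P ⧸ C) W :=
    { toFun := fun ψ => ⟨ψ.1 ∘ₗ C.mkQ, show LinearMap.range (ψ.1 ∘ₗ C.mkQ) ≤ W by rw [hrange]; exact ψ.2⟩
      map_add' := fun ψ₁ ψ₂ => Subtype.ext (LinearMap.add_comp _ _ _)
      map_smul' := fun k ψ => Subtype.ext (LinearMap.smul_comp _ _ _) }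
  have hΦinj : Function.Injective Φ := by
    intro ψ₁ ψ₂ h
    apply Subtype.ext
    apply LinearMap.ext
    intro x
    obtain ⟨p, rfl⟩ := Submodule.mkQ_surjective C x
    exact LinearMap.congr_fun (congrArg Subtype.val h) p
  constructor
  · intro hinv
    have hΦsurj : Function.Surjective Φ := by
      rintro ⟨f, hf⟩
      obtain ⟨g, hg⟩ := Module.projective_lifting_property C.mkQ f (Submodule.mkQ_surjective C)
      have hgrange : LinearMap.range g ≤ radsub Λ P := by
        rintro - ⟨x, rfl⟩
        have hfx : f x ∈ W := hf ⟨x, rfl⟩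
        rw [← hWmap] at hfx
        obtain ⟨y, hy, hyx⟩ := hfx
        have hdiff : g x - y ∈ C := by
          rw [← Submodule.Quotient.mk_eq_zero C]
          have : C.mkQ (g x) = f x := LinearMap.congr_fun hg x
          rw [← Submodule.mkQ_apply, map_sub, this, hyx, sub_self]
        have : g x = (g x - y) + y := by abel
        rw [this]
        exact (radsub Λ P).add_mem (hC hdiff) hy
      have hker : C ≤ LinearMap.ker f := by
        intro c hc
        have h1 : g c ∈ C := hinv g hgrange ⟨c, hc, rfl⟩
        have h2 : f c = C.mkQ (g c) := (LinearMap.congr_fun hg c).symm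
        rw [LinearMap.mem_ker, h2, Submodule.mkQ_apply, Submodule.Quotient.mk_eq_zero]
        exact h1
      refine ⟨⟨C.liftQ f hker, ?_⟩, Subtype.ext (C.liftQ_mkQ f hker)⟩
      show LinearMap.range (C.liftQ f hker) ≤ W
      rw [Submodule.range_liftQ]
      exact hf
    exact (LinearEquiv.ofBijective Φ ⟨hΦinj, hΦsurj⟩).symm.finrank_eq
  · intro hdim
    have hΦsurj : Function.Surjective Φ :=
      ((LinearMap.injective_iff_surjective_of_finrank_eq_finrank (V := homInto K Λ (P ⧸ C) (P ⧸ C) W)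
          (V₂ := homInto K Λ P (P ⧸ C) W) (f := Φ) hdim.symm).mp hΦinj)
    intro f hfr
    rintro - ⟨c, hc, rfl⟩
    have hf' : LinearMap.range (C.mkQ ∘ₗ f) ≤ W := by
      rw [LinearMap.range_comp, ← hWmap]
      exact Submodule.map_mono hfr
    obtain ⟨ψ, hψ⟩ := hΦsurj ⟨C.mkQ ∘ₗ f, hf'⟩
    have h1 : ψ.1 ∘ₗ C.mkQ = C.mkQ ∘ₗ f := congrArg Subtype.val hψ
    have h2 : C.mkQ (f c) = ψ.1 (C.mkQ c) := (LinearMap.congr_fun h1 c).symm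
    rw [← Submodule.Quotient.mk_eq_zero C, ← Submodule.mkQ_apply, h2,
      Submodule.mkQ_apply, (Submodule.Quotient.mk_eq_zero C).mpr hc, map_zero]
end

section
/- Let M be a finite-dimensional left Λ-module and U ⊆ M a top-stably embedded submodule, meaning that JU = U ∩ JM. Then U ⊕ M/U is a top-stable degeneration of M. -/
open Submodule

section Aux

variable {Λ : Type} [Ring Λ]

theorem radsub_le_iff {M : Type} [AddCommGroup M] [Module Λ M] {P : Submodule Λ M} :
    radsub Λ M ≤ P ↔ ∀ a ∈ (⊥ : Ideal Λ).jacobson, ∀ m : M, a • m ∈ P := by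
  rw [radsub, span_le]
  constructor
  · rintro h a ha m; exact h ⟨a, ha, m, rfl⟩
  · rintro h x ⟨a, ha, m, rfl⟩; exact h a ha m

theorem smul_mem_radsub {M : Type} [AddCommGroup M] [Module Λ M] {a : Λ}
    (ha : a ∈ (⊥ : Ideal Λ).jacobson) (m : M) : a • m ∈ radsub Λ M :=
  subset_span ⟨a, ha, m, rfl⟩

theorem radsub_map_le {M N : Type} [AddCommGroup M] [Module Λ M] [AddCommGroup N]
    [Module Λ N] (f : M →ₗ[Λ] N) :
    Submodule.map f (radsub Λ M) ≤ radsub Λ N := by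
  rw [Submodule.map_le_iff_le_comap, radsub_le_iff]
  intro a ha m
  simpa [Submodule.mem_comap] using smul_mem_radsub ha (f m)

theorem radsub_map_surjective {M N : Type} [AddCommGroup M] [Module Λ M] [AddCommGroup N]
    [Module Λ N] (f : M →ₗ[Λ] N) (hf : Function.Surjective f) :
    Submodule.map f (radsub Λ M) = radsub Λ N := by
  refine le_antisymm (radsub_map_le f) (radsub_le_iff.mpr fun a ha n => ?_)
  obtain ⟨m, rfl⟩ := hf n
  exact ⟨a • m, smul_mem_radsub ha m, by simp⟩

theorem radsub_prod {A B : Type} [AddCommGroup A] [Module Λ A] [AddCommGroup B] [Module Λ B] :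
    radsub Λ (A × B) = (radsub Λ A).prod (radsub Λ B) := by
  refine le_antisymm (radsub_le_iff.mpr fun a ha m =>
    ⟨smul_mem_radsub ha m.1, smul_mem_radsub ha m.2⟩) ?_
  rintro ⟨x, y⟩ ⟨h1, h2⟩
  have : (x, y) = ((x, (0 : B)) : A × B) + ((0 : A), y) := by simp
  rw [this]
  exact add_mem (radsub_map_le (LinearMap.inl Λ A B) ⟨x, h1, rfl⟩)
    (radsub_map_le (LinearMap.inr Λ A B) ⟨y, h2, rfl⟩)

theorem jacobson_smul_quot_eq_zero {M : Type} [AddCommGroup M] [Module Λ M] :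
    ∀ a ∈ (⊥ : Ideal Λ).jacobson, ∀ t : M ⧸ radsub Λ M, a • t = 0 := by
  intro a ha t
  obtain ⟨m, rfl⟩ := (radsub Λ M).mkQ_surjective t
  rw [← map_smul, Submodule.mkQ_apply, Submodule.Quotient.mk_eq_zero]
  exact smul_mem_radsub ha m

theorem isSemisimpleModule_of_isSimpleModule {M : Type} [AddCommGroup M] [Module Λ M]
    [IsSimpleModule Λ M] : IsSemisimpleModule Λ M := by
  apply IsSemisimpleModule.of_sSup_simples_eq_top
  rw [eq_top_iff]
  exact le_sSup (IsSimpleModule.congr Submodule.topEquiv)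

theorem isSemisimpleModule_pi {ι : Type} [Finite ι] [DecidableEq ι] (φ : ι → Type)
    [∀ i, AddCommGroup (φ i)] [∀ i, Module Λ (φ i)] [∀ i, IsSemisimpleModule Λ (φ i)] :
    IsSemisimpleModule Λ (∀ i, φ i) :=
  isSemisimpleModule_of_isSemisimpleModule_submodule'
    (p := fun i => LinearMap.range (LinearMap.single Λ φ i))
    (fun _ => IsSemisimpleModule.range _) (LinearMap.iSup_range_single Λ φ)

end Aux

theorem isSemisimpleModule_quot_jacobson (Λ : Type) [Ring Λ] [IsArtinian Λ Λ] :
    IsSemisimpleModule Λ (Λ ⧸ ((⊥ : Ideal Λ).jacobson : Submodule Λ Λ)) := by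
  classical
  obtain ⟨I₀, ⟨t, rfl⟩, hmin⟩ := IsArtinian.set_has_minimal
    (Set.range (fun s : Finset {m : Ideal Λ // m.IsMaximal} => s.inf (fun m => m.1)))
    ⟨⊤, ⟨∅, by simp⟩⟩
  have hle : ∀ m : Ideal Λ, m.IsMaximal → t.inf (fun m => m.1) ≤ m := by
    intro m hm
    have h2 : (insert (⟨m, hm⟩ : {m : Ideal Λ // m.IsMaximal}) t).inf (fun m => m.1)
        ≤ t.inf (fun m => m.1) := Finset.inf_mono (Finset.subset_insert _ _)
    have heq := h2.lt_or_eq.resolve_left (hmin _ ⟨_, rfl⟩)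
    calc t.inf (fun m => m.1) = _ := heq.symm
      _ ≤ m := Finset.inf_le (Finset.mem_insert_self _ _)
  have hJ : (⊥ : Ideal Λ).jacobson = t.inf (fun m => m.1) := by
    refine le_antisymm (Finset.le_inf fun m _ => sInf_le ⟨bot_le, m.2⟩) (le_sInf ?_)
    rintro J ⟨-, hJmax⟩
    exact hle J hJmax
  haveI : ∀ i : {x // x ∈ t}, IsSimpleModule Λ (Λ ⧸ (i.1.1 : Submodule Λ Λ)) :=
    fun i => isSimpleModule_iff_isCoatom.mpr (Ideal.isMaximal_def.mp i.1.2)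
  haveI : ∀ i : {x // x ∈ t}, IsSemisimpleModule Λ (Λ ⧸ (i.1.1 : Submodule Λ Λ)) :=
    fun _ => isSemisimpleModule_of_isSimpleModule
  haveI := isSemisimpleModule_pi (Λ := Λ) (fun i : {x // x ∈ t} => Λ ⧸ (i.1.1 : Submodule Λ Λ))
  set f : Λ →ₗ[Λ] ∀ i : {x // x ∈ t}, Λ ⧸ (i.1.1 : Submodule Λ Λ) :=
    LinearMap.pi fun i => Submodule.mkQ _ with hf
  have hker : LinearMap.ker f = ((⊥ : Ideal Λ).jacobson : Submodule Λ Λ) := by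
    rw [hf, LinearMap.ker_pi]
    simp only [Submodule.ker_mkQ]
    rw [hJ, Finset.inf_eq_iInf]
    exact iInf_subtype (p := fun x => x ∈ t) (f := fun i => i.1.1)
  exact IsSemisimpleModule.congr (M := ↥(LinearMap.range f))
    ((Submodule.quotEquivOfEq _ _ hker.symm).trans f.quotKerEquivRange)

theorem isSemisimpleModule_of_jacobson_smul {Λ : Type} [Ring Λ] [IsArtinian Λ Λ] (T : Type)
    [AddCommGroup T] [Module Λ T]
    (hT : ∀ a ∈ (⊥ : Ideal Λ).jacobson, ∀ t : T, a • t = 0) :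
    IsSemisimpleModule Λ T := by
  haveI := isSemisimpleModule_quot_jacobson Λ
  refine isSemisimpleModule_of_isSemisimpleModule_submodule'
    (p := fun x : T => span Λ {x}) (fun x => ?_)
    (by
      rw [eq_top_iff]
      exact fun y _ => (le_iSup (fun x : T => span Λ {x}) y) (mem_span_singleton_self y))
  set g := LinearMap.toSpanSingleton Λ T x with hg
  have hle : ((⊥ : Ideal Λ).jacobson : Submodule Λ Λ) ≤ LinearMap.ker g := fun a ha => by
    simp [hg, LinearMap.mem_ker, LinearMap.toSpanSingleton_apply, hT a ha x]
  haveI : IsSemisimpleModule Λ (Λ ⧸ LinearMap.ker g) :=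
    IsSemisimpleModule.congr
      (Submodule.quotientQuotientEquivQuotient _ _ hle).symm
  exact IsSemisimpleModule.congr
    ((LinearEquiv.ofEq _ _ (LinearMap.span_singleton_eq_range Λ T x)).trans
      g.quotKerEquivRange.symm)


/-- Proposition 2.9: for a top-stably embedded submodule `U ⊆ M` (i.e. `JU = U ∩ JM`),
the module `U ⊕ M/U` is a top-stable degeneration of `M`. -/
theorem topStablyEmbedded_degeneration
    (K : Type) [Field K] [IsAlgClosed K]
    (Λ : Type) [Ring Λ] [Algebra K Λ] [FiniteDimensional K Λ]
    (M : Type) [AddCommGroup M] [Module K M] [Module Λ M] [IsScalarTower K Λ M]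
    [FiniteDimensional K M]
    (U : Submodule Λ M)
    (hU : radsub Λ ↥U = Submodule.comap U.subtype (radsub Λ M)) :
    IsTopStableDegeneration Λ M (↥U × (M ⧸ U)) := by
  haveI hart : IsArtinian Λ Λ := IsArtinianRing.of_finite K Λ
  haveI : FiniteDimensional K ↥U :=
    FiniteDimensional.of_injective (U.subtype.restrictScalars K) U.injective_subtype
  haveI : Module.Finite Λ ↥U := Module.Finite.of_restrictScalars_finite K Λ ↥U
  constructor
  · refine ⟨↥U, inferInstance, inferInstance, inferInstance,
      LinearMap.prod 0 U.subtype, LinearMap.prodMap LinearMap.id U.mkQ,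
      fun u v h => U.injective_subtype (congrArg Prod.snd h), ?_, ?_⟩
    · rintro ⟨z, q⟩
      obtain ⟨m, rfl⟩ := U.mkQ_surjective q
      exact ⟨(z, m), rfl⟩
    · apply le_antisymm
      · rintro x ⟨u, rfl⟩
        rw [LinearMap.mem_ker]
        have h2 : U.mkQ (U.subtype u) = 0 := (Submodule.Quotient.mk_eq_zero U).mpr u.2
        simp [LinearMap.prod_apply, Pi.prod, h2, Prod.ext_iff]
      · rintro ⟨z, m⟩ hzm
        rw [LinearMap.mem_ker] at hzm
        have h1 : z = 0 := congrArg Prod.fst hzm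
        have h2 : U.mkQ m = 0 := congrArg Prod.snd hzm
        have hm : m ∈ U := (Submodule.Quotient.mk_eq_zero U).mp h2
        refine ⟨⟨m, hm⟩, ?_⟩
        subst h1
        simp [LinearMap.prod_apply, Pi.prod, Prod.ext_iff]
  · -- top stability
    haveI : IsSemisimpleModule Λ (M ⧸ radsub Λ M) :=
      isSemisimpleModule_of_jacobson_smul _ jacobson_smul_quot_eq_zero
    set rM := radsub Λ M with hrM
    set ψ : ↥U →ₗ[Λ] M ⧸ rM := rM.mkQ ∘ₗ U.subtype with hψ
    set P : Submodule Λ (M ⧸ rM) := LinearMap.range ψ with hPdef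
    obtain ⟨P', hP'⟩ := exists_isCompl P
    -- e1 : product quotient
    set φ : (↥U × (M ⧸ U)) →ₗ[Λ] (↥U ⧸ radsub Λ ↥U) × ((M ⧸ U) ⧸ radsub Λ (M ⧸ U)) :=
      LinearMap.prodMap (radsub Λ ↥U).mkQ (radsub Λ (M ⧸ U)).mkQ with hφ
    have hφsurj : Function.Surjective φ := by
      rintro ⟨a, b⟩
      obtain ⟨x, rfl⟩ := (radsub Λ ↥U).mkQ_surjective a
      obtain ⟨y, rfl⟩ := (radsub Λ (M ⧸ U)).mkQ_surjective b
      exact ⟨(x, y), rfl⟩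
    have hkerφ : LinearMap.ker φ = radsub Λ (↥U × (M ⧸ U)) := by
      rw [hφ, LinearMap.ker_prodMap, Submodule.ker_mkQ, Submodule.ker_mkQ, radsub_prod]
    have e1 : ((↥U × (M ⧸ U)) ⧸ radsub Λ (↥U × (M ⧸ U))) ≃ₗ[Λ]
        (↥U ⧸ radsub Λ ↥U) × ((M ⧸ U) ⧸ radsub Λ (M ⧸ U)) :=
      (Submodule.quotEquivOfEq _ _ hkerφ.symm).trans (φ.quotKerEquivOfSurjective hφsurj)
    -- e2 : U ⧸ rU ≃ P
    have hkerψ : radsub Λ ↥U = LinearMap.ker ψ := by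
      rw [hψ, LinearMap.ker_comp, Submodule.ker_mkQ, hU]
    have e2 : (↥U ⧸ radsub Λ ↥U) ≃ₗ[Λ] P :=
      (Submodule.quotEquivOfEq _ _ hkerψ).trans ψ.quotKerEquivRange
    -- e3 : (M⧸U) ⧸ rQ ≃ M ⧸ (U ⊔ rM)
    have hmap1 : Submodule.map U.mkQ (U ⊔ rM) = radsub Λ (M ⧸ U) := by
      rw [Submodule.map_sup, Submodule.mkQ_map_self, bot_sup_eq,
        radsub_map_surjective U.mkQ U.mkQ_surjective]
    have e3 : ((M ⧸ U) ⧸ radsub Λ (M ⧸ U)) ≃ₗ[Λ] (M ⧸ (U ⊔ rM)) :=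
      (Submodule.quotEquivOfEq _ _ hmap1.symm).trans
        (Submodule.quotientQuotientEquivQuotient U (U ⊔ rM) le_sup_left)
    -- e4 : M ⧸ (U ⊔ rM) ≃ P'
    have hmap2 : Submodule.map rM.mkQ (U ⊔ rM) = P := by
      rw [Submodule.map_sup, Submodule.mkQ_map_self, sup_bot_eq, hPdef, hψ,
        LinearMap.range_comp, Submodule.range_subtype]
    have e4 : (M ⧸ (U ⊔ rM)) ≃ₗ[Λ] P' :=
      ((Submodule.quotientQuotientEquivQuotient rM (U ⊔ rM) le_sup_right).symm.trans
        (Submodule.quotEquivOfEq _ _ hmap2)).trans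
        (Submodule.quotientEquivOfIsCompl P P' hP')
    exact ⟨(e1.trans ((e2.prodCongr (e3.trans e4)).trans
      (Submodule.prodEquivOfIsCompl P P' hP')))⟩
end
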